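/- Fix a market with unit demand d = 1, a strict preference profile ≻, and an MPS eating profile e for ≻, with final allocation μ. Then MPS is envy free: for all agents i, i' ∈ N, the row μ_i = (μ_{ij})_{j∈O} first-order stochastically dominates the row μ_{i'} = (μ_{i'j})_{j∈O} for ≻_i. -/

import Mathlib

open MeasureTheory Finset
open scoped Classical

/-- The amount of probability of objects in `S` consumed up to time `t`
under the eating profile `e`:  `μ_S(t,e) = ∫_0^t |{i : e_i(s) ∈ S}| ds`. -/
noncomputable def eatenAmt {N O : Type*} [Fintype N]
    (e : N → ℝ → O) (S : Set O) (t : ℝ) : ℝ :=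
  ∫ s in (0:ℝ)..t, ((Finset.univ.filter (fun i => e i s ∈ S)).card : ℝ)

/-- The final allocation of the eating profile `e`:
`μ_{ij} = ∫_0^1 1{e_i(s) = j} ds`. -/
noncomputable def finalAlloc {N O : Type*} (e : N → ℝ → O) (i : N) (j : O) : ℝ :=
  ∫ s in (0:ℝ)..1, (if e i s = j then (1:ℝ) else 0)

/-- `f` is a right-continuous step function on `[0,1)`: there is a finite set
of breakpoints, and `f` is constant on the stretches between them. -/
def RightContStep {O : Type*} (f : ℝ → O) : Prop :=
  ∃ B : Finset ℝ, ∀ t ∈ Set.Ico (0:ℝ) 1, ∀ s ∈ Set.Ico (0:ℝ) 1,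
    t ≤ s → (∀ b ∈ B, ¬ (t < b ∧ b ≤ s)) → f s = f t

/-- Object `j` satisfies the capacity condition (Cap) at `(t,e)`. -/
def CapOK {N O : Type*} [Fintype N] (c : O → ℕ)
    (e : N → ℝ → O) (j : O) (t : ℝ) : Prop :=
  eatenAmt e {j} t < c j

/-- Object `j` satisfies the global minimums condition (Global) at `(t,e)`. -/
def GlobalOK {N O : Type*} [Fintype N] [Fintype O] (m : O → ℕ)
    (e : N → ℝ → O) (j : O) (t : ℝ) : Prop :=
  ∃ ε > 0, max (m j : ℝ) (eatenAmt e {j} t + ε) +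
      ∑ k ∈ Finset.univ.erase j, max (m k : ℝ) (eatenAmt e {k} t) ≤
    (Fintype.card N : ℝ)

/-- Object `j` is available at `(t,e)`. -/
def Available {N O : Type*} [Fintype N] [Fintype O] (m c : O → ℕ)
    (e : N → ℝ → O) (j : O) (t : ℝ) : Prop :=
  CapOK c e j t ∧ GlobalOK m e j t

/-- `e` is an MPS eating profile for the strict preference profile `P`:
each `e_i` is a right-continuous step function and, at every time
`t ∈ [0,1)`, `e_i(t)` is available and is `i`'s most preferred object among
the available ones. -/
def IsMPS {N O : Type*} [Fintype N] [Fintype O] (m c : O → ℕ)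
    (P : N → O → O → Prop) (e : N → ℝ → O) : Prop :=
  (∀ i, RightContStep (e i)) ∧
  ∀ i, ∀ t ∈ Set.Ico (0:ℝ) 1,
    Available m c e (e i t) t ∧
    ∀ j, Available m c e j t → j ≠ e i t → P i (e i t) j

/-- The closing time `t_j` of object `j` under `e` (with `inf ∅ = 1`). -/
noncomputable def closeTime {N O : Type*} [Fintype N] [Fintype O] (m c : O → ℕ)
    (e : N → ℝ → O) (j : O) : ℝ :=
  sInf ({t ∈ Set.Icc (0:ℝ) 1 | ¬ Available m c e j t} ∪ {1})

/-- The time `τ` at which the global minimums condition starts binding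
under `e` (with `inf ∅ = 1`). -/
noncomputable def globalTime {N O : Type*} [Fintype N] [Fintype O] (m : O → ℕ)
    (e : N → ℝ → O) : ℝ :=
  sInf ({t ∈ Set.Icc (0:ℝ) 1 | ∃ j : O, ¬ GlobalOK m e j t} ∪ {1})

/-- `x` first-order stochastically dominates `y` for the strict preference
`Pi`. -/
def FOSD {O : Type*} [Fintype O] (Pi : O → O → Prop) (x y : O → ℝ) : Prop :=
  ∀ o : O, ∑ j ∈ Finset.univ.filter (fun j => Pi j o ∨ j = o), y j ≤
    ∑ j ∈ Finset.univ.filter (fun j => Pi j o ∨ j = o), x j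

lemma stepSet_measurable {O : Type*} (f : ℝ → O) (hf : RightContStep f) (j : O) :
    MeasurableSet {s | s ∈ Set.Ico (0:ℝ) 1 ∧ f s = j} := by
  classical
  obtain ⟨B, hB⟩ := hf
  set B' : Finset ℝ := insert 0 B with hB'
  have key : {s | s ∈ Set.Ico (0:ℝ) 1 ∧ f s = j}
      = ⋃ t ∈ (B'.filter (fun t => t ∈ Set.Ico (0:ℝ) 1 ∧ f t = j)),
          (Set.Ico t 1 \ ⋃ b ∈ B.filter (fun b => t < b), Set.Ici b) := by
    ext s
    constructor
    · rintro ⟨hs, hfs⟩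
      have h0mem : (0:ℝ) ∈ B'.filter (· ≤ s) := by
        simp [hB', hs.1]
      have hne : ((B'.filter (· ≤ s))).Nonempty := ⟨0, h0mem⟩
      set t := (B'.filter (· ≤ s)).max' hne with ht
      have htmem : t ∈ B'.filter (· ≤ s) := Finset.max'_mem _ _
      have htB' : t ∈ B' := (Finset.mem_filter.mp htmem).1
      have hts : t ≤ s := (Finset.mem_filter.mp htmem).2
      have ht0 : (0:ℝ) ≤ t := Finset.le_max' (B'.filter (· ≤ s)) 0 h0mem
      have htI : t ∈ Set.Ico (0:ℝ) 1 := ⟨ht0, lt_of_le_of_lt hts hs.2⟩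
      have hnob : ∀ b ∈ B, ¬ (t < b ∧ b ≤ s) := by
        rintro b hb ⟨h1, h2⟩
        have : b ≤ t := Finset.le_max' (B'.filter (· ≤ s)) b
          (Finset.mem_filter.mpr ⟨Finset.mem_insert_of_mem hb, h2⟩)
        exact absurd this (not_le.mpr h1)
      have hfst : f s = f t := hB t htI s hs hts hnob
      simp only [Set.mem_iUnion, exists_prop]
      refine ⟨t, Finset.mem_filter.mpr ⟨htB', htI, hfst ▸ hfs⟩, ⟨hts, hs.2⟩, ?_⟩
      intro hcon
      simp only [Set.mem_iUnion, exists_prop, Set.mem_Ici] at hcon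
      obtain ⟨b, hbmem, hbs⟩ := hcon
      obtain ⟨hbB, hbt⟩ := Finset.mem_filter.mp hbmem
      exact hnob b hbB ⟨hbt, hbs⟩
    · intro hmem
      simp only [Set.mem_iUnion, exists_prop] at hmem
      obtain ⟨t, htmem, hsd⟩ := hmem
      obtain ⟨htB', htI, hft⟩ := Finset.mem_filter.mp htmem
      obtain ⟨⟨hts, hs1⟩, hnob⟩ := hsd
      have hsI : s ∈ Set.Ico (0:ℝ) 1 := ⟨le_trans htI.1 hts, hs1⟩
      have hnob' : ∀ b ∈ B, ¬ (t < b ∧ b ≤ s) := by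
        rintro b hb ⟨h1, h2⟩
        refine hnob ?_
        simp only [Set.mem_iUnion, exists_prop, Set.mem_Ici]
        exact ⟨b, Finset.mem_filter.mpr ⟨hb, h1⟩, h2⟩
      have hfst : f s = f t := hB t htI s hsI hts hnob'
      exact ⟨hsI, hfst ▸ hft⟩
  rw [key]
  refine Finset.measurableSet_biUnion _ (fun t _ => ?_)
  exact measurableSet_Ico.diff
    (Finset.measurableSet_biUnion _ (fun b _ => measurableSet_Ici))

lemma step_indicator_intervalIntegrable {O : Type*} (f : ℝ → O)
    (hf : RightContStep f) (j : O) :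
    IntervalIntegrable (fun s => if f s = j then (1:ℝ) else 0) volume 0 1 := by
  classical
  set A := {s | s ∈ Set.Ico (0:ℝ) 1 ∧ f s = j} with hA
  have hAmeas : MeasurableSet A := stepSet_measurable f hf j
  have hAfin : volume A < ⊤ := by
    calc volume A ≤ volume (Set.Ico (0:ℝ) 1) := measure_mono (fun s hs => hs.1)
    _ < ⊤ := by simp [Real.volume_Ico]
  have hind : Integrable (A.indicator (fun _ => (1:ℝ))) := by
    rw [integrable_indicator_iff hAmeas]
    exact integrableOn_const hAfin.ne
  rw [intervalIntegrable_iff_integrableOn_Ioc_of_le zero_le_one]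
  refine (hind.integrableOn).congr ?_
  have h1 : ∀ᵐ (s : ℝ), s ≠ 1 := by
    have hvol : (volume : Measure ℝ) {(1:ℝ)} = 0 := Real.volume_singleton
    rw [ae_iff]
    convert hvol using 2
    ext s
    simp
  filter_upwards [self_mem_ae_restrict measurableSet_Ioc, ae_restrict_of_ae h1]
    with s hs hs1
  have hsI : s ∈ Set.Ico (0:ℝ) 1 := ⟨le_of_lt hs.1, lt_of_le_of_ne hs.2 hs1⟩
  by_cases h : f s = j
  · have : s ∈ A := ⟨hsI, h⟩
    simp [Set.indicator_of_mem this, h]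
  · have : s ∉ A := fun hc => h hc.2
    simp [Set.indicator_of_notMem this, h]

/-- MPS (unit demand) is envy free: under an MPS eating profile,
every agent's final lottery first-order stochastically dominates every other
agent's final lottery with respect to his own preferences. -/
theorem MPS_envy_free
    {N O : Type*} [Fintype N] [Fintype O] [Nonempty N] [Nonempty O]
    (m c : O → ℕ)
    (hc1 : ∀ j, 1 ≤ c j) (hc2 : ∀ j, c j ≤ Fintype.card N)
    (hfeasc : Fintype.card N ≤ ∑ j, c j)
    (hfeasm : ∑ j, m j ≤ Fintype.card N)
    (P : N → O → O → Prop) (hP : ∀ i, IsStrictTotalOrder O (P i))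
    (e : N → ℝ → O) (he : IsMPS m c P e) :
    ∀ i i' : N, FOSD (P i) (finalAlloc e i) (finalAlloc e i') := by
  classical
  intro i i' o
  set U := Finset.univ.filter (fun j => P i j o ∨ j = o) with hU
  have hstep := he.1
  have hmps := he.2
  have hInt : ∀ (a : N) (j : O),
      IntervalIntegrable (fun s => if e a s = j then (1:ℝ) else 0) volume 0 1 :=
    fun a j => step_indicator_intervalIntegrable _ (hstep a) j
  have hsum : ∀ a : N, ∑ j ∈ U, finalAlloc e a j
      = ∫ s in (0:ℝ)..1, ∑ j ∈ U, (if e a s = j then (1:ℝ) else 0) := by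
    intro a
    rw [intervalIntegral.integral_finset_sum (fun j _ => hInt a j)]
    rfl
  have hsum2 : ∀ (a : N) (s : ℝ),
      ∑ j ∈ U, (if e a s = j then (1:ℝ) else 0)
        = (if e a s ∈ U then (1:ℝ) else 0) := by
    intro a s
    simp [Finset.sum_ite_eq]
  have hIntSum : ∀ a : N,
      IntervalIntegrable (fun s => ∑ j ∈ U, (if e a s = j then (1:ℝ) else 0))
        volume 0 1 := by
    intro a
    have h := IntervalIntegrable.sum U (fun j _ => hInt a j)
    have heq : (fun s => ∑ j ∈ U, (if e a s = j then (1:ℝ) else 0))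
        = ∑ j ∈ U, (fun s => if e a s = j then (1:ℝ) else 0) := by
      funext s
      simp [Finset.sum_apply]
    rw [heq]
    exact h
  -- pointwise inequality on [0,1)
  have hpt : ∀ s ∈ Set.Ico (0:ℝ) 1,
      ∑ j ∈ U, (if e i' s = j then (1:ℝ) else 0)
        ≤ ∑ j ∈ U, (if e i s = j then (1:ℝ) else 0) := by
    intro s hs
    rw [hsum2, hsum2]
    have hkey : e i' s ∈ U → e i s ∈ U := by
      intro hmem
      obtain ⟨havail_i, hbest⟩ := hmps i s hs
      obtain ⟨havail_i', _⟩ := hmps i' s hs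
      by_cases heq : e i' s = e i s
      · rwa [heq] at hmem
      · have hPi : P i (e i s) (e i' s) := hbest _ havail_i' heq
        haveI := hP i
        simp only [hU, Finset.mem_filter, Finset.mem_univ, true_and] at hmem ⊢
        rcases hmem with h | h
        · exact Or.inl (IsTrans.trans _ _ _ hPi h)
        · exact Or.inl (h ▸ hPi)
    by_cases h' : e i' s ∈ U
    · simp [h', hkey h']
    · simp only [h', if_false]
      split_ifs <;> norm_num
  have hae : (fun s => ∑ j ∈ U, (if e i' s = j then (1:ℝ) else 0))
      ≤ᵐ[volume.restrict (Set.Icc (0:ℝ) 1)]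
      (fun s => ∑ j ∈ U, (if e i s = j then (1:ℝ) else 0)) := by
    have h1 : ∀ᵐ (s : ℝ), s ≠ 1 := by
      have hvol : (volume : Measure ℝ) {(1:ℝ)} = 0 := Real.volume_singleton
      rw [ae_iff]
      convert hvol using 2
      ext s
      simp
    filter_upwards [self_mem_ae_restrict measurableSet_Icc, ae_restrict_of_ae h1]
      with s hs hs1
    exact hpt s ⟨hs.1, lt_of_le_of_ne hs.2 hs1⟩
  unfold FOSD at *
  rw [hsum i, hsum i']
  exact intervalIntegral.integral_mono_ae_restrict zero_le_one (hIntSum i')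
    (hIntSum i) hae
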